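/- Let D ⊊ ℝⁿ be a bounded domain with diameter d. For all x, y ∈ D: m_D(x,y) ≥ |log(η(y)/η(x))|, where m_D is the infimal path-length metric with density d/η(z) and η(z) = δ(z)(d − δ(z)). -/

import Mathlib

open Set Metric Filter Topology

variable {n : ℕ}

noncomputable def deltaD {n : ℕ} (D : Set (EuclideanSpace ℝ (Fin n)))
    (z : EuclideanSpace ℝ (Fin n)) : ℝ :=
  Metric.infDist z (frontier D)

noncomputable def etaD {n : ℕ} (D : Set (EuclideanSpace ℝ (Fin n)))
    (z : EuclideanSpace ℝ (Fin n)) : ℝ :=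
  deltaD D z * (Metric.diam D - deltaD D z)

/-- The length of a C¹ path with respect to the density `diam D / η`. -/
noncomputable def mLength {n : ℕ} (D : Set (EuclideanSpace ℝ (Fin n)))
    (γ : ℝ → EuclideanSpace ℝ (Fin n)) : ℝ :=
  ∫ t in (0:ℝ)..1, (Metric.diam D / etaD D (γ t)) * ‖deriv γ t‖


section Geom
variable {D : Set (EuclideanSpace ℝ (Fin n))}

lemma frontier_nonempty (hx : (D : Set (EuclideanSpace ℝ (Fin n))).Nonempty)
    (hproper : D ≠ Set.univ) : (frontier D).Nonempty :=
  nonempty_frontier_iff.2 ⟨hx, hproper⟩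

lemma deltaD_pos (hopen : IsOpen D) (hproper : D ≠ Set.univ)
    {z : EuclideanSpace ℝ (Fin n)} (hz : z ∈ D) : 0 < deltaD D z := by
  have hne : (frontier D).Nonempty := frontier_nonempty ⟨z, hz⟩ hproper
  refine (isClosed_frontier.notMem_iff_infDist_pos hne).1 ?_
  intro hzf
  rw [hopen.frontier_eq] at hzf
  exact hzf.2 hz

lemma ball_deltaD_subset (hopen : IsOpen D) (hproper : D ≠ Set.univ)
    {z : EuclideanSpace ℝ (Fin n)} (hz : z ∈ D) :
    Metric.ball z (deltaD D z) ⊆ D := by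
  obtain ⟨w, hwf, hw⟩ := exists_mem_frontier_infDist_compl_eq_dist hz hproper
  have h1 : deltaD D z ≤ Metric.infDist z Dᶜ := by
    rw [hw]; exact Metric.infDist_le_dist_of_mem hwf
  exact (Metric.ball_subset_ball h1).trans Metric.ball_infDist_compl_subset

lemma two_deltaD_le (hn : 1 ≤ n) (hopen : IsOpen D) (hproper : D ≠ Set.univ)
    (hbdd : Bornology.IsBounded D)
    {z : EuclideanSpace ℝ (Fin n)} (hz : z ∈ D) :
    2 * deltaD D z ≤ Metric.diam D := by
  by_contra hlt
  push_neg at hlt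
  obtain ⟨r, hr1, hr2⟩ := exists_between hlt
  have hr0 : 0 < r := lt_of_le_of_lt Metric.diam_nonneg hr1
  set e : EuclideanSpace ℝ (Fin n) := EuclideanSpace.single ⟨0, hn⟩ (1 : ℝ) with he
  have hnorm : ‖e‖ = 1 := by simp [he]
  have hmem : ∀ s : ℝ, |s| < deltaD D z → z + s • e ∈ D := by
    intro s hs
    apply ball_deltaD_subset hopen hproper hz
    simp [Metric.mem_ball, dist_eq_norm, hnorm, abs_of_nonneg, norm_smul, hs]
  have h1 : z + (r/2) • e ∈ D := by
    apply hmem; rw [abs_of_nonneg] <;> linarith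
  have h2 : z + (-(r/2)) • e ∈ D := by
    apply hmem; rw [abs_neg, abs_of_nonneg] <;> linarith
  have hd : dist (z + (r/2) • e) (z + (-(r/2)) • e) = r := by
    rw [dist_eq_norm]
    have : (z + (r/2) • e) - (z + (-(r/2)) • e) = r • e := by module
    rw [this, norm_smul, hnorm]
    simp [abs_of_nonneg hr0.le]
  have := Metric.dist_le_diam_of_mem hbdd h1 h2
  rw [hd] at this
  linarith

lemma deltaD_lt_diam (hn : 1 ≤ n) (hopen : IsOpen D) (hproper : D ≠ Set.univ)
    (hbdd : Bornology.IsBounded D)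
    {z : EuclideanSpace ℝ (Fin n)} (hz : z ∈ D) :
    deltaD D z < Metric.diam D - 0 := by
  have h1 := two_deltaD_le hn hopen hproper hbdd hz
  have h2 := deltaD_pos hopen hproper hz
  linarith

lemma sub_deltaD_pos (hn : 1 ≤ n) (hopen : IsOpen D) (hproper : D ≠ Set.univ)
    (hbdd : Bornology.IsBounded D)
    {z : EuclideanSpace ℝ (Fin n)} (hz : z ∈ D) :
    0 < Metric.diam D - deltaD D z := by
  have h1 := two_deltaD_le hn hopen hproper hbdd hz
  have h2 := deltaD_pos hopen hproper hz
  linarith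

lemma etaD_pos (hn : 1 ≤ n) (hopen : IsOpen D) (hproper : D ≠ Set.univ)
    (hbdd : Bornology.IsBounded D)
    {z : EuclideanSpace ℝ (Fin n)} (hz : z ∈ D) :
    0 < etaD D z :=
  mul_pos (deltaD_pos hopen hproper hz) (sub_deltaD_pos hn hopen hproper hbdd hz)

lemma abs_log_sub_log_le {a b : ℝ} (ha : 0 < a) (hb : 0 < b) :
    |Real.log a - Real.log b| ≤ |a - b| / min a b := by
  wlog h : b ≤ a generalizing a b
  · rw [abs_sub_comm, abs_sub_comm a b, min_comm]
    exact this hb ha (le_of_not_ge h)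
  rw [min_eq_right h, abs_of_nonneg (sub_nonneg.2 (Real.log_le_log hb h)),
    abs_of_nonneg (sub_nonneg.2 h)]
  rw [← Real.log_div ha.ne' hb.ne']
  have h1 : Real.log (a / b) ≤ a / b - 1 := Real.log_le_sub_one_of_pos (by positivity)
  have h2 : a / b - 1 = (a - b) / b := by field_simp
  linarith [h1, h2.le]

lemma abs_deltaD_sub_le {v w : EuclideanSpace ℝ (Fin n)} :
    |deltaD D v - deltaD D w| ≤ dist v w := by
  have := Metric.lipschitz_infDist_pt (frontier D) |>.dist_le_mul v w
  rw [Real.dist_eq] at this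
  simpa [deltaD] using this

lemma log_etaD_est (hn : 1 ≤ n) (hopen : IsOpen D) (hproper : D ≠ Set.univ)
    (hbdd : Bornology.IsBounded D)
    {v w : EuclideanSpace ℝ (Fin n)} (hv : v ∈ D) (hw : w ∈ D) :
    |Real.log (etaD D v) - Real.log (etaD D w)| ≤
      dist v w * ((min (deltaD D v) (deltaD D w))⁻¹ +
        (min (Metric.diam D - deltaD D v) (Metric.diam D - deltaD D w))⁻¹) := by
  have hδv := deltaD_pos hopen hproper hv
  have hδw := deltaD_pos hopen hproper hw
  have hsv := sub_deltaD_pos hn hopen hproper hbdd hv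
  have hsw := sub_deltaD_pos hn hopen hproper hbdd hw
  have e1 : Real.log (etaD D v) = Real.log (deltaD D v) +
      Real.log (Metric.diam D - deltaD D v) := Real.log_mul hδv.ne' hsv.ne'
  have e2 : Real.log (etaD D w) = Real.log (deltaD D w) +
      Real.log (Metric.diam D - deltaD D w) := Real.log_mul hδw.ne' hsw.ne'
  have t1 : |Real.log (deltaD D v) - Real.log (deltaD D w)| ≤
      dist v w / min (deltaD D v) (deltaD D w) :=
    (abs_log_sub_log_le hδv hδw).trans
      ((div_le_div_iff_of_pos_right (lt_min hδv hδw)).2 abs_deltaD_sub_le)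
  have t2 : |Real.log (Metric.diam D - deltaD D v) -
      Real.log (Metric.diam D - deltaD D w)| ≤
      dist v w / min (Metric.diam D - deltaD D v) (Metric.diam D - deltaD D w) := by
    refine (abs_log_sub_log_le hsv hsw).trans
      ((div_le_div_iff_of_pos_right (lt_min hsv hsw)).2 ?_)
    have h : (Metric.diam D - deltaD D v) - (Metric.diam D - deltaD D w)
        = -(deltaD D v - deltaD D w) := by ring
    rw [h, abs_neg]; exact abs_deltaD_sub_le
  have key : Real.log (etaD D v) - Real.log (etaD D w) =
      (Real.log (deltaD D v) - Real.log (deltaD D w)) +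
      (Real.log (Metric.diam D - deltaD D v) -
        Real.log (Metric.diam D - deltaD D w)) := by rw [e1, e2]; ring
  rw [key, mul_add, ← div_eq_mul_inv, ← div_eq_mul_inv]
  exact (abs_add_le _ _).trans (add_le_add t1 t2)
lemma key_ineq (hn : 1 ≤ n) (hopen : IsOpen D) (hproper : D ≠ Set.univ)
    (hbdd : Bornology.IsBounded D) (γ : ℝ → EuclideanSpace ℝ (Fin n))
    (hγ : ContDiffOn ℝ 1 γ (Set.Icc 0 1))
    (hmem : ∀ t ∈ Set.Icc (0:ℝ) 1, γ t ∈ D) :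
    |Real.log (etaD D (γ 1)) - Real.log (etaD D (γ 0))| ≤ mLength D γ := by
  set d := Metric.diam D with hd
  -- positivity facts along the path
  have hδpos : ∀ t ∈ Icc (0:ℝ) 1, 0 < deltaD D (γ t) := fun t ht =>
    deltaD_pos hopen hproper (hmem t ht)
  have hspos : ∀ t ∈ Icc (0:ℝ) 1, 0 < d - deltaD D (γ t) := fun t ht =>
    sub_deltaD_pos hn hopen hproper hbdd (hmem t ht)
  have hηpos : ∀ t ∈ Icc (0:ℝ) 1, 0 < etaD D (γ t) := fun t ht =>
    etaD_pos hn hopen hproper hbdd (hmem t ht)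
  -- continuity facts
  have hγc : ContinuousOn γ (Icc 0 1) := hγ.continuousOn
  have hδc : ContinuousOn (fun t => deltaD D (γ t)) (Icc 0 1) :=
    (Metric.continuous_infDist_pt (frontier D)).comp_continuousOn hγc
  have hηc : ContinuousOn (fun t => etaD D (γ t)) (Icc 0 1) :=
    hδc.mul (continuousOn_const.sub hδc)
  have hdvc : ContinuousOn (fun t => derivWithin γ (Icc 0 1) t) (Icc 0 1) :=
    hγ.continuousOn_derivWithin (uniqueDiffOn_Icc zero_lt_one) le_rfl
  set g0 : ℝ → ℝ := fun t => (d / etaD D (γ t)) * ‖derivWithin γ (Icc 0 1) t‖ with hg0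
  have hg0c : ContinuousOn g0 (Icc 0 1) :=
    (continuousOn_const.div hηc fun t ht => (hηpos t ht).ne').mul hdvc.norm
  set g : ℝ → ℝ := Set.IccExtend zero_le_one (fun t : Icc (0:ℝ) 1 => g0 t) with hgdef
  have hgc : Continuous g :=
    Continuous.Icc_extend' (continuousOn_iff_continuous_restrict.1 hg0c)
  have hg_eq : ∀ t ∈ Icc (0:ℝ) 1, g t = g0 t := fun t ht =>
    Set.IccExtend_of_mem zero_le_one _ ht
  set f : ℝ → ℝ := fun t => Real.log (etaD D (γ t)) with hf
  have hfc : ContinuousOn f (Icc 0 1) := hηc.log fun t ht => (hηpos t ht).ne'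
  -- the slope estimate
  have hslope : ∀ t ∈ Ico (0:ℝ) 1, ∀ r, g t < r →
      ∀ᶠ z in 𝓝[>] t, |slope f t z| < r := by
    intro t ht r hr
    have htI : t ∈ Icc (0:ℝ) 1 := Ico_subset_Icc_self ht
    have hsub : Ioc t 1 ⊆ Icc (0:ℝ) 1 := fun z hz => ⟨le_trans htI.1 hz.1.le, hz.2⟩
    have hsub' : Ioc t 1 ⊆ Icc (0:ℝ) 1 \ {t} := fun z hz =>
      ⟨hsub hz, fun h => absurd (h ▸ hz.1) (lt_irrefl _)⟩
    set F := 𝓝[Ioc t 1] t with hF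
    have hFle : F ≤ 𝓝[Icc 0 1] t := nhdsWithin_mono t hsub
    have A1 : Filter.Tendsto γ F (𝓝 (γ t)) := (hγc t htI).mono_left hFle
    have A2 : Filter.Tendsto (fun z => deltaD D (γ z)) F (𝓝 (deltaD D (γ t))) :=
      ((Metric.continuous_infDist_pt (frontier D)).tendsto _).comp A1
    have hδt := hδpos t htI
    have hst := hspos t htI
    set M : ℝ → ℝ := fun z => (min (deltaD D (γ z)) (deltaD D (γ t)))⁻¹ +
      (min (d - deltaD D (γ z)) (d - deltaD D (γ t)))⁻¹ with hM
    have m1 : Filter.Tendsto (fun z => (min (deltaD D (γ z)) (deltaD D (γ t)))⁻¹)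
        F (𝓝 (deltaD D (γ t))⁻¹) := by
      have := (A2.min (tendsto_const_nhds (α := ℝ) (f := F))).inv₀
        (by rw [min_self]; exact hδt.ne')
      simpa [min_self] using this
    have m2 : Filter.Tendsto (fun z => (min (d - deltaD D (γ z)) (d - deltaD D (γ t)))⁻¹)
        F (𝓝 (d - deltaD D (γ t))⁻¹) := by
      have := ((tendsto_const_nhds.sub A2).min (tendsto_const_nhds (α := ℝ) (f := F))).inv₀
        (by rw [min_self]; exact hst.ne')
      simpa [min_self] using this
    have tendM : Filter.Tendsto M F
        (𝓝 ((deltaD D (γ t))⁻¹ + (d - deltaD D (γ t))⁻¹)) := m1.add m2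
    -- slope of γ tends to the norm of the derivative
    have hv : HasDerivWithinAt γ (derivWithin γ (Icc 0 1) t) (Icc 0 1) t :=
      ((hγ.differentiableOn one_ne_zero) t htI).hasDerivWithinAt
    have ts : Filter.Tendsto (slope γ t) F (𝓝 (derivWithin γ (Icc 0 1) t)) :=
      ((hasDerivWithinAt_iff_tendsto_slope.1 hv)).mono_left (nhdsWithin_mono t hsub')
    have tsn : Filter.Tendsto (fun z => ‖slope γ t z‖ * M z) F
        (𝓝 (‖derivWithin γ (Icc 0 1) t‖ *
          ((deltaD D (γ t))⁻¹ + (d - deltaD D (γ t))⁻¹))) :=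
      ((continuous_norm.tendsto _).comp ts).mul tendM
    have hgt : g t = ‖derivWithin γ (Icc 0 1) t‖ *
        ((deltaD D (γ t))⁻¹ + (d - deltaD D (γ t))⁻¹) := by
      rw [hg_eq t htI, hg0]
      have hηt := hηpos t htI
      have : etaD D (γ t) = deltaD D (γ t) * (d - deltaD D (γ t)) := rfl
      field_simp [this]
      rw [this]; ring
    rw [hgt] at hr
    have ev1 : ∀ᶠ z in F, ‖slope γ t z‖ * M z < r := tsn.eventually_lt_const hr
    have ev2 : ∀ᶠ z in F, z ∈ Ioc t 1 := eventually_mem_nhdsWithin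
    have ev3 : ∀ᶠ z in F, |slope f t z| < r := by
      filter_upwards [ev1, ev2] with z h1 h2
      refine lt_of_le_of_lt ?_ h1
      have hzI : z ∈ Icc (0:ℝ) 1 := hsub h2
      have hzt : 0 < z - t := sub_pos.2 h2.1
      have est := log_etaD_est hn hopen hproper hbdd (hmem z hzI) (hmem t htI)
      rw [slope_def_field, abs_div, abs_of_pos hzt]
      rw [show ‖slope γ t z‖ = dist (γ z) (γ t) / (z - t) by
        rw [slope_def_module, norm_smul, norm_inv, Real.norm_eq_abs,
          abs_of_pos hzt, dist_eq_norm, div_eq_inv_mul]]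
      rw [div_mul_eq_mul_div, div_le_div_iff_of_pos_right hzt]
      exact est
    rwa [hF, nhdsWithin_Ioc_eq_nhdsGT ht.2] at ev3
  -- fencing
  have hgint : ∀ a b : ℝ, IntervalIntegrable g MeasureTheory.volume a b :=
    fun a b => hgc.intervalIntegrable a b
  have hBd : ∀ c : ℝ, ∀ u : ℝ, HasDerivAt (fun u => c + ∫ s in (0:ℝ)..u, g s) (g u) u := by
    intro c u
    exact (intervalIntegral.integral_hasDerivAt_right (hgint 0 u)
      hgc.stronglyMeasurable.stronglyMeasurableAtFilter hgc.continuousAt).const_add c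
  have up : f 1 ≤ f 0 + ∫ s in (0:ℝ)..1, g s := by
    have := image_le_of_liminf_slope_right_le_deriv_boundary (B' := g) hfc
      (by simp) (fun u _ => ((hBd (f 0) u).continuousAt.continuousWithinAt))
      (fun u _ => (hBd (f 0) u).hasDerivWithinAt)
      (fun t ht r hr => ((hslope t ht r hr).mono fun z hz =>
        lt_of_le_of_lt (le_abs_self _) hz).frequently)
    exact this (right_mem_Icc.2 zero_le_one)
  have down : -f 1 ≤ -f 0 + ∫ s in (0:ℝ)..1, g s := by
    have := image_le_of_liminf_slope_right_le_deriv_boundary (B' := g)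
      (f := fun t => -f t) hfc.neg
      (by simp) (fun u _ => ((hBd (-f 0) u).continuousAt.continuousWithinAt))
      (fun u _ => (hBd (-f 0) u).hasDerivWithinAt)
      (fun t ht r hr => ((hslope t ht r hr).mono fun z hz => by
        rw [slope_neg]
        exact lt_of_le_of_lt (neg_le_abs _) hz).frequently)
    exact this (right_mem_Icc.2 zero_le_one)
  have habs : |f 1 - f 0| ≤ ∫ s in (0:ℝ)..1, g s := abs_le.2 ⟨by linarith, by linarith⟩
  have hint_eq : mLength D γ = ∫ s in (0:ℝ)..1, g s := by
    unfold mLength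
    apply intervalIntegral.integral_congr_ae
    have h1 : ∀ᵐ s ∂(MeasureTheory.volume : MeasureTheory.Measure ℝ),
        s ∉ ({1} : Set ℝ) :=
      MeasureTheory.measure_eq_zero_iff_ae_notMem.mp Real.volume_singleton
    filter_upwards [h1] with s hs hsI
    rw [Set.uIoc_of_le zero_le_one] at hsI
    have hs1 : s < 1 := lt_of_le_of_ne hsI.2 (by simpa using hs)
    have hsOo : s ∈ Ioo (0:ℝ) 1 := ⟨hsI.1, hs1⟩
    have hsIcc : s ∈ Icc (0:ℝ) 1 := Ioo_subset_Icc_self hsOo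
    show Metric.diam D / etaD D (γ s) * ‖deriv γ s‖ = g s
    rw [hg_eq s hsIcc]
    show _ = d / etaD D (γ s) * ‖derivWithin γ (Icc 0 1) s‖
    rw [derivWithin_of_mem_nhds (Icc_mem_nhds hsOo.1 hsOo.2)]
  rw [hint_eq]
  exact habs

end Geom

section Chain
variable {E : Type*} [NormedAddCommGroup E] [NormedSpace ℝ E]


/-- In an open connected set, any two points are joined by a chain of segments. -/
lemma exists_chain {D : Set E} (hopen : IsOpen D) (hconn : IsConnected D)
    {x y : E} (hx : x ∈ D) (hy : y ∈ D) :
    ∃ (k : ℕ) (p : ℕ → E), p 0 = x ∧ p k = y ∧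
      ∀ i < k, segment ℝ (p i) (p (i + 1)) ⊆ D := by
  set S : Set E := {z | z ∈ D ∧ ∃ (k : ℕ) (p : ℕ → E), p 0 = x ∧ p k = z ∧
      ∀ i < k, segment ℝ (p i) (p (i + 1)) ⊆ D} with hS
  set T : Set E := {z | z ∈ D ∧ z ∉ S} with hT
  have hSext : ∀ z ∈ S, ∀ w ∈ D, segment ℝ z w ⊆ D → w ∈ S := by
    rintro z ⟨hzD, k, p, hp0, hpk, hseg⟩ w hwD hsw
    refine ⟨hwD, k + 1, fun i => if i = k + 1 then w else p i, by simp [hp0], by simp, ?_⟩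
    intro i hi
    rcases Nat.lt_succ_iff_lt_or_eq.1 hi with h | h
    · simpa [Nat.ne_of_lt (Nat.lt_succ_of_lt h), Nat.ne_of_lt (Nat.succ_lt_succ h), Nat.ne_of_lt h] using hseg i h
    · subst h; simpa [hpk] using hsw
  have hSopen : IsOpen S := by
    rw [Metric.isOpen_iff]
    rintro z hz
    obtain ⟨ε, hε, hball⟩ := Metric.isOpen_iff.1 hopen z hz.1
    refine ⟨ε, hε, fun w hw => ?_⟩
    exact hSext z hz w (hball hw)
      (((convex_ball z ε).segment_subset (mem_ball_self hε) hw).trans hball)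
  have hTopen : IsOpen T := by
    rw [Metric.isOpen_iff]
    rintro z ⟨hzD, hzS⟩
    obtain ⟨ε, hε, hball⟩ := Metric.isOpen_iff.1 hopen z hzD
    refine ⟨ε, hε, fun w hw => ⟨hball hw, fun hwS => hzS ?_⟩⟩
    exact hSext w hwS z hzD
      (((convex_ball z ε).segment_subset hw (mem_ball_self hε)).trans hball
        |>.trans' (by rw [segment_symm]))
  have hxS : x ∈ S := ⟨hx, 0, fun _ => x, rfl, rfl, by simp⟩
  have hDS : D ⊆ S := by
    refine hconn.isPreconnected.subset_left_of_subset_union hSopen hTopen ?_ ?_ ⟨x, hx, hxS⟩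
    · exact disjoint_left.2 fun z hzS hzT => hzT.2 hzS
    · intro z hz
      by_cases h : z ∈ S
      · exact Or.inl h
      · exact Or.inr ⟨hz, h⟩
  obtain ⟨_, k, p, hp0, hpk, hseg⟩ := hDS hy
  exact ⟨k, p, hp0, hpk, hseg⟩

/-- A chain of segments inside `D` can be turned into a `C¹` path inside `D`. -/
lemma chain_to_path {D : Set E} {k : ℕ} (hk : 1 ≤ k) {p : ℕ → E}
    (hseg : ∀ i < k, segment ℝ (p i) (p (i + 1)) ⊆ D) :
    ∃ γ : ℝ → E, ContDiff ℝ 1 γ ∧ γ 0 = p 0 ∧ γ 1 = p k ∧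
      ∀ t ∈ Icc (0:ℝ) 1, γ t ∈ D := by
  set c : ℕ → ℝ → ℝ := fun i t => Real.smoothTransition ((k : ℝ) * t - i) with hc
  refine ⟨fun t => p 0 + ∑ i ∈ Finset.range k, c i t • (p (i + 1) - p i), ?_, ?_, ?_, ?_⟩
  · refine contDiff_const.add (ContDiff.sum fun i _ => ?_)
    exact (Real.smoothTransition.contDiff.comp
      ((contDiff_const.mul contDiff_id).sub contDiff_const)).smul contDiff_const
  · have h0 : ∀ i ∈ Finset.range k, c i 0 • (p (i + 1) - p i) = 0 := by
      intro i _
      rw [hc]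
      simp only [mul_zero, zero_sub]
      rw [Real.smoothTransition.zero_of_nonpos (neg_nonpos.2 (Nat.cast_nonneg i))]
      simp
    beta_reduce
    rw [Finset.sum_congr rfl h0]
    simp
  · have : ∀ i ∈ Finset.range k, c i 1 • (p (i + 1) - p i) = (p (i + 1) - p i) := by
      intro i hi
      rw [Finset.mem_range] at hi
      rw [hc]
      simp only [mul_one]
      rw [Real.smoothTransition.one_of_one_le (by
        have : (i : ℝ) + 1 ≤ (k : ℝ) := by exact_mod_cast Nat.succ_le_of_lt hi
        linarith), one_smul]
    beta_reduce
    rw [Finset.sum_congr rfl this, Finset.sum_range_sub (f := p)]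
    abel
  · intro t ht
    set m : ℕ := min (Nat.floor ((k : ℝ) * t)) (k - 1) with hm
    have hkt0 : (0:ℝ) ≤ (k : ℝ) * t := mul_nonneg (Nat.cast_nonneg k) ht.1
    have hmk : m < k := lt_of_le_of_lt (min_le_right _ _) (Nat.sub_lt hk zero_lt_one)
    have hmle : (m : ℝ) ≤ (k : ℝ) * t := by
      refine le_trans ?_ (Nat.floor_le hkt0)
      exact_mod_cast min_le_left _ _
    have hzero : ∀ i ∈ Finset.range k, m < i → c i t • (p (i + 1) - p i) = 0 := by
      intro i hi hmi
      rw [Finset.mem_range] at hi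
      have hkt_lt : (k : ℝ) * t < i := by
        rcases le_or_gt (Nat.floor ((k : ℝ) * t)) (k - 1) with h | h
        · have hmfl : m = Nat.floor ((k : ℝ) * t) := min_eq_left h
          have h1 : (k : ℝ) * t < Nat.floor ((k : ℝ) * t) + 1 := Nat.lt_floor_add_one _
          have h2 : (m : ℝ) + 1 ≤ i := by exact_mod_cast Nat.succ_le_of_lt hmi
          rw [hmfl] at h2
          linarith
        · exact absurd hi (not_lt.2 (le_trans (by omega) hmi))
      rw [hc]
      simp only []
      rw [Real.smoothTransition.zero_of_nonpos (by linarith), zero_smul]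
    have hone : ∀ i ∈ Finset.range m, c i t • (p (i + 1) - p i) = p (i + 1) - p i := by
      intro i hi
      rw [Finset.mem_range] at hi
      have : (i : ℝ) + 1 ≤ m := by exact_mod_cast Nat.succ_le_of_lt hi
      rw [hc]
      simp only []
      rw [Real.smoothTransition.one_of_one_le (by linarith), one_smul]
    have hsum : ∑ i ∈ Finset.range k, c i t • (p (i + 1) - p i)
        = (p m - p 0) + c m t • (p (m + 1) - p m) := by
      rw [← Finset.sum_subset (Finset.range_subset_range.2 (Nat.succ_le_of_lt hmk))
        (fun i hik hinot => hzero i hik (by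
          rw [Finset.mem_range, not_lt] at hinot; omega))]
      rw [Finset.sum_range_succ, Finset.sum_congr rfl hone, Finset.sum_range_sub (f := p)]
    have : p 0 + ∑ i ∈ Finset.range k, c i t • (p (i + 1) - p i)
        = p m + c m t • (p (m + 1) - p m) := by rw [hsum]; abel
    beta_reduce
    rw [this]
    apply hseg m hmk
    rw [segment_eq_image']
    exact ⟨c m t, ⟨Real.smoothTransition.nonneg _, Real.smoothTransition.le_one _⟩, rfl⟩

end Chain

/-- The infimal path-length metric `m_D` with density `diam D / η(z)`. -/
noncomputable def mDist {n : ℕ} (D : Set (EuclideanSpace ℝ (Fin n)))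
    (x y : EuclideanSpace ℝ (Fin n)) : ℝ :=
  sInf { L : ℝ | ∃ γ : ℝ → EuclideanSpace ℝ (Fin n),
    ContDiffOn ℝ 1 γ (Set.Icc 0 1) ∧ γ 0 = x ∧ γ 1 = y ∧
    (∀ t ∈ Set.Icc (0:ℝ) 1, γ t ∈ D) ∧ L = mLength D γ }

theorem stmt_17 {n : ℕ} (hn : 2 ≤ n) (D : Set (EuclideanSpace ℝ (Fin n)))
    (hopen : IsOpen D) (hconn : IsConnected D) (hproper : D ≠ Set.univ)
    (hbdd : Bornology.IsBounded D)
    (x y : EuclideanSpace ℝ (Fin n)) (hx : x ∈ D) (hy : y ∈ D) :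
    |Real.log (etaD D y / etaD D x)| ≤ mDist D x y := by
  have hn1 : 1 ≤ n := le_trans one_le_two hn
  have hηx := etaD_pos hn1 hopen hproper hbdd hx
  have hηy := etaD_pos hn1 hopen hproper hbdd hy
  -- a C¹ path from x to y inside D
  obtain ⟨k, p, hp0, hpk, hseg⟩ := exists_chain hopen hconn hx hy
  set p' : ℕ → EuclideanSpace ℝ (Fin n) := fun i => if i ≤ k then p i else y with hp'
  have hseg' : ∀ i < k + 1, segment ℝ (p' i) (p' (i + 1)) ⊆ D := by
    intro i hi
    rcases Nat.lt_succ_iff_lt_or_eq.1 hi with h | h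
    · simpa [hp', h.le, Nat.succ_le_of_lt h] using hseg i h
    · subst h
      simp only [hp', le_refl, if_true, Nat.not_succ_le_self, if_false, hpk,
        segment_same]
      exact singleton_subset_iff.2 hy
  obtain ⟨γ, hγ, hγ0, hγ1, hγmem⟩ := chain_to_path (Nat.le_add_left 1 k) hseg'
  have hγ0' : γ 0 = x := by rw [hγ0]; simp [hp', hp0]
  have hγ1' : γ 1 = y := by rw [hγ1]; simp [hp']
  have hmemS : mLength D γ ∈ { L : ℝ | ∃ γ : ℝ → EuclideanSpace ℝ (Fin n),
      ContDiffOn ℝ 1 γ (Set.Icc 0 1) ∧ γ 0 = x ∧ γ 1 = y ∧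
      (∀ t ∈ Set.Icc (0:ℝ) 1, γ t ∈ D) ∧ L = mLength D γ } :=
    ⟨γ, hγ.contDiffOn, hγ0', hγ1', hγmem, rfl⟩
  rw [mDist]
  refine le_csInf ⟨_, hmemS⟩ ?_
  rintro L ⟨σ, hσ, hσ0, hσ1, hσmem, rfl⟩
  rw [Real.log_div hηy.ne' hηx.ne']
  have := key_ineq hn1 hopen hproper hbdd σ hσ hσmem
  rwa [hσ1, hσ0] at this
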